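/- Let n ≥ 2, let a = (a_1,…,a_n) be a tuple of integers with each a_i ≥ 2, let t ∈ ℂ, and let s ∈ ℂ with s ≠ 0. Suppose z = (z_1,…,z_n) ∈ ℂ^n satisfies g_a^{t,s}(z) = 0 and ∂g_a^{t,s}/∂z_j(z) = 0 for all j with 2 ≤ j ≤ n. Then z_i ≠ 0 for every i = 1,…,n, and the (n−1)×(n−1) matrix of second partial derivatives ( ∂²p_{−a}/∂z_i∂z_j (z_2,…,z_n) )_{2≤i,j≤n} is invertible. -/

import Mathlib

open scoped BigOperators

/-- The signed chain polynomial (0-based indices). -/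
noncomputable def chainP (n : ℕ) (a : ℕ → ℕ) (z : ℕ → ℂ) : ℂ :=
  (∑ k ∈ Finset.range (n - 1), (-1 : ℂ) ^ (k + 1) * z k ^ a k * z (k + 1))
    + (-1 : ℂ) ^ n * z (n - 1) ^ a (n - 1)

/-- `g_a^{t,s}(z) = z_1 − s z_2 − t z_1^{a_1} z_2 − p_{−a}(z_2,…,z_n)` (0-based). -/
noncomputable def gMap (n : ℕ) (a : ℕ → ℕ) (t s : ℂ) (z : ℕ → ℂ) : ℂ :=
  z 0 - s * z 1 - t * z 0 ^ a 0 * z 1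
    - chainP (n - 1) (fun i => a (i + 1)) (fun i => z (i + 1))

/-- The complex partial derivative of `f` with respect to the `i`-th coordinate at `z`. -/
noncomputable def pd (f : (ℕ → ℂ) → ℂ) (i : ℕ) (z : ℕ → ℂ) : ℂ :=
  deriv (fun w => f (Function.update z i w)) (z i)

namespace S13

noncomputable def vv (m : ℕ) (w : ℕ → ℂ) (i : ℕ) : ℂ := if i + 1 < m then w (i+1) else 1

noncomputable def dd (m : ℕ) (b : ℕ → ℕ) (w : ℕ → ℂ) (i : ℕ) : ℂ :=
  (-1)^(i+1) * (b i : ℂ) * ((b i : ℂ) - 1) * w i ^ (b i - 2) * vv m w i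

noncomputable def ee (b : ℕ → ℕ) (w : ℕ → ℂ) (i : ℕ) : ℂ :=
  (-1)^(i+1) * (b i : ℂ) * w i ^ (b i - 1)

noncomputable def phi (m : ℕ) (b : ℕ → ℕ) (w : ℕ → ℂ) (i : ℕ) : ℂ :=
  (if i < m - 1 then (-1:ℂ)^(i+1) * (b i : ℂ) * w i ^ (b i - 1) * w (i+1) else 0)
  + (if 1 ≤ i then (-1:ℂ)^i * w (i-1) ^ (b (i-1)) else 0)
  + (if i = m - 1 then (-1:ℂ)^m * (b i : ℂ) * w i ^ (b i - 1) else 0)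

lemma hasDerivAt_update_pow (w : ℕ → ℂ) (i k p : ℕ) :
    HasDerivAt (fun x => (Function.update w i x k) ^ p)
      (if k = i then (p:ℂ) * w i ^ (p-1) else 0) (w i) := by
  by_cases h : k = i
  · subst h
    simp only [Function.update_self, if_pos rfl]
    exact hasDerivAt_pow p (w k)
  · simp only [Function.update_of_ne h, if_neg h]
    exact hasDerivAt_const _ _

lemma hasDerivAt_update (w : ℕ → ℂ) (i l : ℕ) :
    HasDerivAt (fun x => Function.update w i x l) (if l = i then 1 else 0) (w i) := by
  by_cases h : l = i
  · subst h
    simp only [Function.update_self, if_pos rfl]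
    exact hasDerivAt_id _
  · simp only [Function.update_of_ne h, if_neg h]
    exact hasDerivAt_const _ _

lemma hasDerivAt_chainP (m : ℕ) (b : ℕ → ℕ) (w : ℕ → ℂ) (i : ℕ) (him : i < m) :
    HasDerivAt (fun x => chainP m b (Function.update w i x)) (phi m b w i) (w i) := by
  have hterm : ∀ k, HasDerivAt
      (fun x => (-1:ℂ)^(k+1) * (Function.update w i x k) ^ (b k) * (Function.update w i x (k+1)))
      ((if k = i then (-1:ℂ)^(k+1) * ((b k:ℂ) * w k ^ (b k - 1) * w (k+1)) else 0)
        + (if k+1 = i then (-1:ℂ)^(k+1) * w k ^ (b k) else 0)) (w i) := by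
    intro k
    have h := ((hasDerivAt_update_pow w i k (b k)).const_mul ((-1:ℂ)^(k+1))).mul
      (hasDerivAt_update w i (k+1))
    simp only [Function.update_eq_self] at h
    refine h.congr_deriv ?_
    split_ifs with h1 h2 h2 <;> first
      | omega
      | (subst h1; ring)
      | ring
  have hsum := HasDerivAt.sum (u := Finset.range (m-1)) (fun k _ => hterm k)
  have hlast : HasDerivAt (fun x => (-1:ℂ)^m * (Function.update w i x (m-1)) ^ (b (m-1)))
      (if m - 1 = i then (-1:ℂ)^m * ((b (m-1):ℂ) * w (m-1) ^ (b (m-1) - 1)) else 0) (w i) := by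
    have h := (hasDerivAt_update_pow w i (m-1) (b (m-1))).const_mul ((-1:ℂ)^m)
    refine h.congr_deriv ?_
    split_ifs with h1
    · subst h1; ring
    · ring
  have h := hsum.add hlast
  have h2 : (∑ k ∈ Finset.range (m-1), (if k+1 = i then (-1:ℂ)^(k+1) * w k ^ (b k) else 0))
      = (if 1 ≤ i then (-1:ℂ)^i * w (i-1) ^ (b (i-1)) else 0) := by
    rcases Nat.eq_zero_or_pos i with h0 | h0
    · subst h0; simp
    · obtain ⟨i', rfl⟩ : ∃ i', i = i' + 1 := ⟨i - 1, by omega⟩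
      simp only [add_left_inj]
      rw [Finset.sum_ite_eq' (Finset.range (m-1)) i']
      rw [if_pos (Finset.mem_range.mpr (by omega)), if_pos (by omega)]
      simp
  have hval : (∑ k ∈ Finset.range (m-1),
      ((if k = i then (-1:ℂ)^(k+1) * ((b k:ℂ) * w k ^ (b k - 1) * w (k+1)) else 0)
        + (if k+1 = i then (-1:ℂ)^(k+1) * w k ^ (b k) else 0)))
      + (if m - 1 = i then (-1:ℂ)^m * ((b (m-1):ℂ) * w (m-1) ^ (b (m-1) - 1)) else 0)
      = phi m b w i := by
    rw [Finset.sum_add_distrib, Finset.sum_ite_eq' (Finset.range (m-1)) i, h2]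
    unfold phi
    congr 1
    congr 1
    · simp only [Finset.mem_range]
      split_ifs with h1
      · ring
      · rfl
    · rcases eq_or_ne i (m-1) with hh | hh
      · rw [if_pos hh.symm, if_pos hh, hh]; ring
      · rw [if_neg (fun c => hh c.symm), if_neg hh]
  rw [← hval]
  exact h.congr_of_eventuallyEq (Filter.Eventually.of_forall fun x => by
    simp only [chainP, Pi.add_apply, Finset.sum_apply])

lemma pd_chainP (m : ℕ) (b : ℕ → ℕ) (w : ℕ → ℂ) (i : ℕ) (him : i < m) :
    pd (chainP m b) i w = phi m b w i :=
  (hasDerivAt_chainP m b w i him).deriv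

lemma hasDerivAt_phi (m : ℕ) (b : ℕ → ℕ) (w : ℕ → ℂ) (i j : ℕ) (him : i < m) (hjm : j < m)
    (hb : ∀ k < m, 2 ≤ b k) :
    HasDerivAt (fun x => phi m b (Function.update w i x) j)
      (if i = j then dd m b w i else if i = j + 1 then ee b w j
        else if j = i + 1 then ee b w i else 0) (w i) := by
  have hbj : 2 ≤ b j := hb j hjm
  have hcast : ((b j - 1 : ℕ):ℂ) = (b j:ℂ) - 1 := by
    rw [Nat.cast_sub (by omega : 1 ≤ b j), Nat.cast_one]
  have H1 : HasDerivAt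
      (fun x => (if j < m - 1 then (-1:ℂ)^(j+1) * (b j:ℂ) *
        (Function.update w i x j) ^ (b j - 1) * (Function.update w i x (j+1)) else 0))
      (if j < m - 1 then (-1:ℂ)^(j+1) * (b j:ℂ) *
        ((if j = i then ((b j:ℂ) - 1) * w i ^ (b j - 2) else 0) * w (j+1)
          + w j ^ (b j - 1) * (if j + 1 = i then 1 else 0)) else 0) (w i) := by
    by_cases hc : j < m - 1
    · simp only [if_pos hc]
      have h := ((hasDerivAt_update_pow w i j (b j - 1)).const_mul
        ((-1:ℂ)^(j+1) * (b j:ℂ))).mul (hasDerivAt_update w i (j+1))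
      simp only [Function.update_eq_self] at h
      rw [show b j - 1 - 1 = b j - 2 from by omega, hcast] at h
      refine h.congr_deriv ?_
      split_ifs <;> ring
    · simp only [if_neg hc]
      exact hasDerivAt_const _ _
  have H2 : HasDerivAt
      (fun x => (if 1 ≤ j then (-1:ℂ)^j * (Function.update w i x (j-1)) ^ (b (j-1)) else 0))
      (if 1 ≤ j then (-1:ℂ)^j *
        (if j - 1 = i then ((b (j-1)):ℂ) * w i ^ (b (j-1) - 1) else 0) else 0) (w i) := by
    by_cases hc : 1 ≤ j
    · simp only [if_pos hc]
      exact (hasDerivAt_update_pow w i (j-1) (b (j-1))).const_mul ((-1:ℂ)^j)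
    · simp only [if_neg hc]
      exact hasDerivAt_const _ _
  have H3 : HasDerivAt
      (fun x => (if j = m - 1 then (-1:ℂ)^m * (b j:ℂ) *
        (Function.update w i x j) ^ (b j - 1) else 0))
      (if j = m - 1 then (-1:ℂ)^m * (b j:ℂ) *
        (if j = i then ((b j:ℂ) - 1) * w i ^ (b j - 2) else 0) else 0) (w i) := by
    by_cases hc : j = m - 1
    · simp only [if_pos hc]
      have h := (hasDerivAt_update_pow w i j (b j - 1)).const_mul ((-1:ℂ)^m * (b j:ℂ))
      rw [show b j - 1 - 1 = b j - 2 from by omega, hcast] at h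
      exact h
    · simp only [if_neg hc]
      exact hasDerivAt_const _ _
  have H := (H1.add H2).add H3
  have hval : (if j < m - 1 then (-1:ℂ)^(j+1) * (b j:ℂ) *
        ((if j = i then ((b j:ℂ) - 1) * w i ^ (b j - 2) else 0) * w (j+1)
          + w j ^ (b j - 1) * (if j + 1 = i then 1 else 0)) else 0)
      + (if 1 ≤ j then (-1:ℂ)^j *
        (if j - 1 = i then ((b (j-1)):ℂ) * w i ^ (b (j-1) - 1) else 0) else 0)
      + (if j = m - 1 then (-1:ℂ)^m * (b j:ℂ) *
        (if j = i then ((b j:ℂ) - 1) * w i ^ (b j - 2) else 0) else 0)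
      = (if i = j then dd m b w i else if i = j + 1 then ee b w j
        else if j = i + 1 then ee b w i else 0) := by
    rcases eq_or_ne i j with hij | hij
    · subst hij
      rw [if_pos rfl]
      have h2 : (if 1 ≤ i then (-1:ℂ)^i *
          (if i - 1 = i then ((b (i-1)):ℂ) * w i ^ (b (i-1) - 1) else 0) else 0) = 0 := by
        by_cases h1 : 1 ≤ i
        · rw [if_pos h1, if_neg (by omega : ¬ i - 1 = i)]; ring
        · rw [if_neg h1]
      rw [h2]
      unfold dd vv
      by_cases hc : i < m - 1
      · rw [if_pos hc, if_pos rfl, if_neg (by omega : ¬ i + 1 = i),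
          if_neg (by omega : ¬ i = m - 1), if_pos (by omega : i + 1 < m)]
        ring
      · have hm : m = i + 1 := by omega
        subst hm
        rw [if_neg hc, if_pos (by omega : i = i + 1 - 1), if_pos rfl,
          if_neg (by omega : ¬ i + 1 < i + 1)]
        ring
    · rw [if_neg hij]
      rcases eq_or_ne i (j+1) with hij1 | hij1
      · subst hij1
        rw [if_pos rfl]
        unfold ee
        have hc : j < m - 1 := by omega
        have h2 : (if 1 ≤ j then (-1:ℂ)^j *
            (if j - 1 = j + 1 then ((b (j-1)):ℂ) * w (j+1) ^ (b (j-1) - 1) else 0) else 0) = 0 := by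
          by_cases h1 : 1 ≤ j
          · rw [if_pos h1, if_neg (by omega : ¬ j - 1 = j + 1)]; ring
          · rw [if_neg h1]
        have h3 : (if j = m - 1 then (-1:ℂ)^m * (b j:ℂ) *
            (if j = j + 1 then ((b j:ℂ) - 1) * w (j+1) ^ (b j - 2) else 0) else 0) = 0 := by
          by_cases h1 : j = m - 1
          · rw [if_pos h1, if_neg (by omega : ¬ j = j + 1)]; ring
          · rw [if_neg h1]
        rw [h2, h3, if_pos hc, if_neg (by omega : ¬ j = j + 1), if_pos rfl]
        ring
      · rw [if_neg hij1]
        rcases eq_or_ne j (i+1) with hji1 | hji1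
        · subst hji1
          rw [if_pos rfl]
          unfold ee
          have h1 : (if i + 1 < m - 1 then (-1:ℂ)^(i+1+1) * (b (i+1):ℂ) *
              ((if i + 1 = i then ((b (i+1):ℂ) - 1) * w i ^ (b (i+1) - 2) else 0) * w (i+1+1)
                + w (i+1) ^ (b (i+1) - 1) * (if i + 1 + 1 = i then 1 else 0)) else 0) = 0 := by
            by_cases hx : i + 1 < m - 1
            · rw [if_pos hx, if_neg (by omega : ¬ i + 1 = i),
                if_neg (by omega : ¬ i + 1 + 1 = i)]; ring
            · rw [if_neg hx]
          have h3 : (if i + 1 = m - 1 then (-1:ℂ)^m * (b (i+1):ℂ) *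
              (if i + 1 = i then ((b (i+1):ℂ) - 1) * w i ^ (b (i+1) - 2) else 0) else 0) = 0 := by
            by_cases hx : i + 1 = m - 1
            · rw [if_pos hx, if_neg (by omega : ¬ i + 1 = i)]; ring
            · rw [if_neg hx]
          rw [h1, h3, if_pos (by omega : 1 ≤ i + 1)]
          simp only [Nat.add_sub_cancel, if_true]
          ring
        · rw [if_neg hji1]
          have h1 : (if j < m - 1 then (-1:ℂ)^(j+1) * (b j:ℂ) *
              ((if j = i then ((b j:ℂ) - 1) * w i ^ (b j - 2) else 0) * w (j+1)
                + w j ^ (b j - 1) * (if j + 1 = i then 1 else 0)) else 0) = 0 := by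
            by_cases hx : j < m - 1
            · rw [if_pos hx, if_neg (fun h => hij h.symm),
                if_neg (fun h => hij1 h.symm)]; ring
            · rw [if_neg hx]
          have h2 : (if 1 ≤ j then (-1:ℂ)^j *
              (if j - 1 = i then ((b (j-1)):ℂ) * w i ^ (b (j-1) - 1) else 0) else 0) = 0 := by
            by_cases hx : 1 ≤ j
            · rw [if_pos hx, if_neg (by omega : ¬ j - 1 = i)]; ring
            · rw [if_neg hx]
          have h3 : (if j = m - 1 then (-1:ℂ)^m * (b j:ℂ) *
              (if j = i then ((b j:ℂ) - 1) * w i ^ (b j - 2) else 0) else 0) = 0 := by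
            by_cases hx : j = m - 1
            · rw [if_pos hx, if_neg (fun h => hij h.symm)]; ring
            · rw [if_neg hx]
          rw [h1, h2, h3]
          ring
  rw [← hval]
  exact H

lemma pd_pd_chainP (m : ℕ) (b : ℕ → ℕ) (w : ℕ → ℂ) (i j : ℕ) (him : i < m) (hjm : j < m)
    (hb : ∀ k < m, 2 ≤ b k) :
    pd (pd (chainP m b) j) i w =
      (if i = j then dd m b w i else if i = j + 1 then ee b w j
        else if j = i + 1 then ee b w i else 0) := by
  have hfun : (fun x => pd (chainP m b) j (Function.update w i x))
      = fun x => phi m b (Function.update w i x) j :=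
    funext fun x => pd_chainP m b _ j hjm
  rw [pd, hfun]
  exact (hasDerivAt_phi m b w i j him hjm hb).deriv

noncomputable def triDet : ℕ → (ℕ → ℂ) → (ℕ → ℂ) → ℂ
  | 0, _, _ => 1
  | 1, d, _ => d 0
  | (N+2), d, e => d 0 * triDet (N+1) (fun i => d (i+1)) (fun i => e (i+1))
      - e 0 ^ 2 * triDet N (fun i => d (i+2)) (fun i => e (i+2))

noncomputable def triMat (N : ℕ) (d e : ℕ → ℂ) : Matrix (Fin N) (Fin N) ℂ :=
  Matrix.of fun i j =>
    if (i:ℕ) = (j:ℕ) then d (i:ℕ)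
    else if (i:ℕ) = (j:ℕ) + 1 then e (j:ℕ)
    else if (j:ℕ) = (i:ℕ) + 1 then e (i:ℕ) else 0

lemma det_triMat : ∀ (N : ℕ) (d e : ℕ → ℂ), (triMat N d e).det = triDet N d e := by
  intro N
  induction N using Nat.strong_induction_on with
  | _ N ih =>
    match N with
    | 0 => intro d e; simp [triDet, Matrix.det_fin_zero]
    | 1 => intro d e; simp [triDet, Matrix.det_fin_one, triMat]
    | (N+2) =>
      intro d e
      have hz2 : ((0 : Fin (N+2)) : ℕ) = 0 := rfl
      have hz1 : ((0 : Fin (N+1)) : ℕ) = 0 := rfl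
      have hsa0 : ((0:Fin (N+1)).succ.succAbove (0 : Fin (N+1))) = 0 := by
        rw [Fin.succAbove_of_castSucc_lt _ _ (by simp [Fin.lt_def])]
        simp
      have hsaS : ∀ j : Fin N, ((0:Fin (N+1)).succ.succAbove j.succ) = j.succ.succ :=
        fun j => Fin.succAbove_of_le_castSucc _ _ (by simp [Fin.le_def])
      rw [Matrix.det_succ_row_zero, Fin.sum_univ_succ, Fin.sum_univ_succ]
      have htail : (∑ j : Fin N, (-1:ℂ) ^ ((j.succ.succ : Fin (N+2)):ℕ)
          * triMat (N+2) d e 0 j.succ.succ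
          * ((triMat (N+2) d e).submatrix Fin.succ j.succ.succ.succAbove).det) = 0 := by
        apply Finset.sum_eq_zero
        intro j _
        have h0 : triMat (N+2) d e 0 j.succ.succ = 0 := by
          simp only [triMat, Matrix.of_apply, Fin.val_succ, Fin.val_zero, hz1, hz2]
          split_ifs <;> first | rfl | omega | exact False.elim ‹False›
        rw [h0]
        ring
      rw [htail]
      have hsub0 : (triMat (N+2) d e).submatrix Fin.succ ((0 : Fin (N+2)).succAbove)
          = triMat (N+1) (fun i => d (i+1)) (fun i => e (i+1)) := by
        ext i j
        simp only [Matrix.submatrix_apply, triMat, Matrix.of_apply, Fin.zero_succAbove,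
          Fin.val_succ]
        split_ifs <;> first | rfl | omega | exact False.elim ‹False›
      have h00 : triMat (N+2) d e 0 0 = d 0 := by
        simp [triMat]
      have h01 : triMat (N+2) d e 0 ((0 : Fin (N+1)).succ) = e 0 := by
        simp only [triMat, Matrix.of_apply, Fin.val_succ, Fin.val_zero, hz1, hz2]
        split_ifs <;> first | rfl | omega | exact False.elim ‹False›
      have hS : ((triMat (N+2) d e).submatrix Fin.succ ((0 : Fin (N+1)).succ.succAbove)).det
          = e 0 * triDet N (fun i => d (i+2)) (fun i => e (i+2)) := by
        set S := (triMat (N+2) d e).submatrix Fin.succ ((0 : Fin (N+1)).succ.succAbove) with hSdef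
        rw [Matrix.det_succ_column_zero, Fin.sum_univ_succ]
        have hcol : ∀ i : Fin N, S i.succ 0 = 0 := by
          intro i
          simp only [hSdef, Matrix.submatrix_apply, hsa0, triMat, Matrix.of_apply,
            Fin.val_succ, Fin.val_zero, hz1, hz2]
          split_ifs <;> first | rfl | omega | exact False.elim ‹False›
        have htail2 : (∑ i : Fin N, (-1:ℂ) ^ ((i.succ : Fin (N+1)):ℕ) * S i.succ 0
            * (S.submatrix i.succ.succAbove Fin.succ).det) = 0 := by
          apply Finset.sum_eq_zero
          intro i _
          rw [hcol i]
          ring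
        rw [htail2]
        have hS00 : S 0 0 = e 0 := by
          simp only [hSdef, Matrix.submatrix_apply, hsa0, triMat, Matrix.of_apply,
            Fin.val_succ, Fin.val_zero, hz1, hz2]
          split_ifs <;> first | rfl | omega | exact False.elim ‹False›
        have hsub2 : S.submatrix ((0 : Fin (N+1)).succAbove) Fin.succ
            = triMat N (fun i => d (i+2)) (fun i => e (i+2)) := by
          ext i j
          simp only [hSdef, Matrix.submatrix_apply, Fin.zero_succAbove, hsaS,
            triMat, Matrix.of_apply, Fin.val_succ]
          split_ifs <;> first | rfl | omega | exact False.elim ‹False›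
        rw [hS00, hsub2, ih N (by omega)]
        simp
      rw [hsub0, h00, h01, hS, ih (N+1) (by omega)]
      simp only [Fin.val_zero, Fin.val_succ, pow_zero, pow_one]
      rw [show triDet (N+2) d e = d 0 * triDet (N+1) (fun i => d (i+1)) (fun i => e (i+1))
        - e 0 ^ 2 * triDet N (fun i => d (i+2)) (fun i => e (i+2)) from rfl]
      ring

noncomputable def Aseq (m : ℕ) (b : ℕ → ℕ) : ℕ → ℕ
  | 0 => 1
  | 1 => b (m-1) - 1
  | (k+2) => (b (m-(k+2)) - 1) * Aseq m b (k+1) + b (m-(k+2)) * Aseq m b k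

noncomputable def rhoSeq (m : ℕ) (d e : ℕ → ℂ) (b : ℕ → ℕ) : ℕ → ℂ
  | 0 => 1
  | 1 => d (m-1) / ((b (m-1) : ℂ) - 1)
  | (k+2) => -(e (m-(k+2)))^2 / (b (m-(k+2)) : ℂ) * rhoSeq m d e b k

section tri
variable (m : ℕ) (d e : ℕ → ℂ) (b : ℕ → ℕ)

lemma cast_sub_one_ne {k : ℕ} (hk : 2 ≤ k) : ((k:ℂ) - 1) ≠ 0 := by
  have : ((k - 1 : ℕ) : ℂ) = (k:ℂ) - 1 := by
    rw [Nat.cast_sub (by omega : 1 ≤ k), Nat.cast_one]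
  rw [← this]
  exact_mod_cast (by omega : (k - 1 : ℕ) ≠ 0)

lemma Aseq_pos (hm : 1 ≤ m) (hb : ∀ j < m, 2 ≤ b j) : ∀ k ≤ m, 0 < Aseq m b k := by
  have key : ∀ k, k ≤ m → 0 < Aseq m b k ∧ (k + 1 ≤ m → 0 < Aseq m b (k+1)) := by
    intro k
    induction k with
    | zero =>
      intro _
      constructor
      · simp [Aseq]
      · intro h1
        show 0 < Aseq m b 1
        have h2 : Aseq m b 1 = b (m-1) - 1 := rfl
        have := hb (m-1) (by omega)
        omega
    | succ k ihk =>
      intro hk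
      obtain ⟨h1, h2⟩ := ihk (by omega)
      refine ⟨h2 hk, fun hk2 => ?_⟩
      show 0 < Aseq m b (k+2)
      have hbk : 2 ≤ b (m - (k+2)) := hb _ (by omega)
      have hA : Aseq m b (k+2) = (b (m-(k+2)) - 1) * Aseq m b (k+1) + b (m-(k+2)) * Aseq m b k := rfl
      have hpos : 0 < b (m-(k+2)) * Aseq m b k := Nat.mul_pos (by omega) h1
      omega
  intro k hk
  exact (key k hk).1

lemma rhoSeq_ne (hm : 1 ≤ m) (hb : ∀ j < m, 2 ≤ b j)
    (hd : ∀ j < m, d j ≠ 0) (he : ∀ j, j + 2 ≤ m → e j ≠ 0) :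
    ∀ k ≤ m, rhoSeq m d e b k ≠ 0 := by
  have key : ∀ k, k ≤ m → rhoSeq m d e b k ≠ 0 ∧ (k + 1 ≤ m → rhoSeq m d e b (k+1) ≠ 0) := by
    intro k
    induction k with
    | zero =>
      intro _
      constructor
      · simp [rhoSeq]
      · intro h1
        show d (m-1) / ((b (m-1) : ℂ) - 1) ≠ 0
        exact div_ne_zero (hd _ (by omega)) (cast_sub_one_ne (hb _ (by omega)))
    | succ k ihk =>
      intro hk
      obtain ⟨h1, h2⟩ := ihk (by omega)
      refine ⟨h2 hk, fun hk2 => ?_⟩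
      show -(e (m-(k+2)))^2 / (b (m-(k+2)) : ℂ) * rhoSeq m d e b k ≠ 0
      have hbk : 2 ≤ b (m - (k+2)) := hb _ (by omega)
      have hbne : (b (m-(k+2)) : ℂ) ≠ 0 := by exact_mod_cast (by omega : b (m-(k+2)) ≠ 0)
      have hene : e (m-(k+2)) ≠ 0 := he _ (by omega)
      exact mul_ne_zero (div_ne_zero (by simpa using pow_ne_zero 2 hene) hbne) h1
  intro k hk
  exact (key k hk).1

lemma hQ (hm : 1 ≤ m) (hb : ∀ j < m, 2 ≤ b j)
    (hd : ∀ j < m, d j ≠ 0) (he : ∀ j, j + 2 ≤ m → e j ≠ 0)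
    (hstar : ∀ j, j + 2 ≤ m →
      (b j : ℂ) * d j * d (j+1) = -((b j : ℂ) - 1) * ((b (j+1) : ℂ) - 1) * e j ^ 2) :
    ∀ k, 2 ≤ k → k ≤ m → d (m-k) * rhoSeq m d e b (k-1)
      = ((b (m-k) : ℂ) - 1) * rhoSeq m d e b k := by
  intro k
  induction k with
  | zero => omega
  | succ k ihk =>
    intro hk2 hkm
    rcases Nat.lt_or_ge k 2 with hklt | hkge
    · -- k + 1 = 2
      have hk1 : k = 1 := by omega
      subst hk1
      show d (m-2) * rhoSeq m d e b 1 = ((b (m-2) : ℂ) - 1) * rhoSeq m d e b 2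
      have e1 : rhoSeq m d e b 1 = d (m-1) / ((b (m-1) : ℂ) - 1) := rfl
      have e2 : rhoSeq m d e b 2 = -(e (m-2))^2 / (b (m-2) : ℂ) * 1 := rfl
      rw [e1, e2]
      have h1 : ((b (m-1):ℂ) - 1) ≠ 0 := cast_sub_one_ne (hb _ (by omega))
      have h2 : ((b (m-2):ℂ)) ≠ 0 := by
        have := hb (m-2) (by omega); exact_mod_cast (by omega : b (m-2) ≠ 0)
      have hst := hstar (m-2) (by omega)
      rw [show m - 2 + 1 = m - 1 from by omega] at hst
      have hst2 : d (m-2) * d (m-1) / ((b (m-1):ℂ) - 1)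
          = -((b (m-2):ℂ) - 1) * e (m-2)^2 / (b (m-2):ℂ) := by
        rw [div_eq_div_iff h1 h2]
        linear_combination hst
      linear_combination hst2
    · -- k ≥ 2
      have ih := ihk (by omega) (by omega)
      have hq : d (m-(k+1)) * rhoSeq m d e b k
          = ((b (m-(k+1)) : ℂ) - 1) * rhoSeq m d e b (k+1) := by
        have hrw : rhoSeq m d e b (k+1) = -(e (m-(k+1)))^2 / (b (m-(k+1)) : ℂ)
            * rhoSeq m d e b (k-1) := by
          obtain ⟨k', rfl⟩ : ∃ k', k = k' + 1 := ⟨k - 1, by omega⟩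
          rfl
        have hdk : d (m-k) ≠ 0 := hd _ (by omega)
        have hbk : ((b (m-(k+1)) : ℂ)) ≠ 0 := by
          have := hb (m-(k+1)) (by omega); exact_mod_cast (by omega : b (m-(k+1)) ≠ 0)
        have hst := hstar (m-(k+1)) (by omega)
        rw [show m - (k+1) + 1 = m - k from by omega] at hst
        have hst' : d (m-(k+1)) * d (m-k)
            = -((b (m-(k+1)):ℂ) - 1) * ((b (m-k):ℂ) - 1) * e (m-(k+1))^2 / (b (m-(k+1)):ℂ) := by
          rw [eq_div_iff hbk]
          linear_combination hst
        rw [hrw]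
        apply mul_left_cancel₀ hdk
        linear_combination (rhoSeq m d e b k) * hst'
          + (-((b (m-(k+1)):ℂ) - 1) * (-(e (m-(k+1)))^2) / (b (m-(k+1)):ℂ)) * ih
      simpa using hq

lemma triDet_shift_eq (hm : 1 ≤ m) (hb : ∀ j < m, 2 ≤ b j)
    (hd : ∀ j < m, d j ≠ 0) (he : ∀ j, j + 2 ≤ m → e j ≠ 0)
    (hstar : ∀ j, j + 2 ≤ m →
      (b j : ℂ) * d j * d (j+1) = -((b j : ℂ) - 1) * ((b (j+1) : ℂ) - 1) * e j ^ 2) :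
    ∀ k ≤ m, triDet k (fun i => d (m-k+i)) (fun i => e (m-k+i))
      = rhoSeq m d e b k * (Aseq m b k : ℂ) := by
  have key : ∀ k, k ≤ m → (triDet k (fun i => d (m-k+i)) (fun i => e (m-k+i))
      = rhoSeq m d e b k * (Aseq m b k : ℂ)) ∧
      (k + 1 ≤ m → triDet (k+1) (fun i => d (m-(k+1)+i)) (fun i => e (m-(k+1)+i))
      = rhoSeq m d e b (k+1) * (Aseq m b (k+1) : ℂ)) := by
    intro k
    induction k with
    | zero =>
      intro _
      constructor
      · simp [triDet, rhoSeq, Aseq]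
      · intro h1
        show (fun i => d (m-1+i)) 0 = _
        simp only [Nat.add_zero]
        have hb1 : 2 ≤ b (m-1) := hb _ (by omega)
        have hA1 : (Aseq m b 1 : ℂ) = (b (m-1) : ℂ) - 1 := by
          show ((b (m-1) - 1 : ℕ) : ℂ) = _
          rw [Nat.cast_sub (by omega : 1 ≤ b (m-1)), Nat.cast_one]
        rw [hA1]
        show d (m-1) = d (m-1) / ((b (m-1):ℂ) - 1) * ((b (m-1):ℂ) - 1)
        rw [div_mul_cancel₀]
        exact cast_sub_one_ne hb1
    | succ k ihk =>
      intro hk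
      obtain ⟨h1, h2⟩ := ihk (by omega)
      refine ⟨h2 hk, fun hk2 => ?_⟩
      have hrec : triDet (k+2) (fun i => d (m-(k+2)+i)) (fun i => e (m-(k+2)+i))
          = (fun i => d (m-(k+2)+i)) 0
            * triDet (k+1) (fun i => d (m-(k+2)+(i+1))) (fun i => e (m-(k+2)+(i+1)))
          - (fun i => e (m-(k+2)+i)) 0 ^ 2
            * triDet k (fun i => d (m-(k+2)+(i+2))) (fun i => e (m-(k+2)+(i+2))) := rfl
      rw [hrec]
      simp only [Nat.add_zero]
      have ha1 : (fun i => d (m-(k+2)+(i+1))) = (fun i => d (m-(k+1)+i)) := by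
        funext i; congr 1; omega
      have ha2 : (fun i => e (m-(k+2)+(i+1))) = (fun i => e (m-(k+1)+i)) := by
        funext i; congr 1; omega
      have ha3 : (fun i => d (m-(k+2)+(i+2))) = (fun i => d (m-k+i)) := by
        funext i; congr 1; omega
      have ha4 : (fun i => e (m-(k+2)+(i+2))) = (fun i => e (m-k+i)) := by
        funext i; congr 1; omega
      rw [ha1, ha2, ha3, ha4, h1, h2 hk]
      have hq := hQ m d e b hm hb hd he hstar (k+2) (by omega) hk2
      rw [show k + 2 - 1 = k + 1 from by omega] at hq
      have hbk2 : 2 ≤ b (m-(k+2)) := hb _ (by omega)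
      have hbk : ((b (m-(k+2)) : ℂ)) ≠ 0 := by
        exact_mod_cast (by omega : b (m-(k+2)) ≠ 0)
      have hrho : rhoSeq m d e b (k+2) = -(e (m-(k+2)))^2 / (b (m-(k+2)) : ℂ)
          * rhoSeq m d e b k := rfl
      have hA : (Aseq m b (k+2) : ℂ) = ((b (m-(k+2)) : ℂ) - 1) * (Aseq m b (k+1) : ℂ)
          + (b (m-(k+2)) : ℂ) * (Aseq m b k : ℂ) := by
        show ((((b (m-(k+2)) - 1) * Aseq m b (k+1) + b (m-(k+2)) * Aseq m b k : ℕ)) : ℂ) = _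
        push_cast [Nat.cast_sub (by omega : 1 ≤ b (m-(k+2)))]
        ring
      rw [hA, hrho]
      rw [hrho] at hq
      have hcanc : (b (m-(k+2)):ℂ) * ((b (m-(k+2)):ℂ))⁻¹ = 1 := mul_inv_cancel₀ hbk
      linear_combination (Aseq m b (k+1) : ℂ) * hq
        + (e (m-(k+2))^2 * rhoSeq m d e b k * (Aseq m b k : ℂ)) * hcanc
  intro k hk
  exact (key k hk).1

lemma triDet_ne_zero (hm : 1 ≤ m) (hb : ∀ j < m, 2 ≤ b j)
    (hd : ∀ j < m, d j ≠ 0) (he : ∀ j, j + 2 ≤ m → e j ≠ 0)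
    (hstar : ∀ j, j + 2 ≤ m →
      (b j : ℂ) * d j * d (j+1) = -((b j : ℂ) - 1) * ((b (j+1) : ℂ) - 1) * e j ^ 2) :
    triDet m d e ≠ 0 := by
  have h := triDet_shift_eq m d e b hm hb hd he hstar m le_rfl
  have hfun1 : (fun i => d (m-m+i)) = d := by funext i; congr 1; omega
  have hfun2 : (fun i => e (m-m+i)) = e := by funext i; congr 1; omega
  rw [hfun1, hfun2] at h
  rw [h]
  apply mul_ne_zero
  · exact rhoSeq_ne m d e b hm hb hd he m le_rfl
  · exact_mod_cast (by have := Aseq_pos m b hm hb m le_rfl; omega : (Aseq m b m : ℕ) ≠ 0)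

end tri

lemma pd_gMap (n : ℕ) (a : ℕ → ℕ) (t s : ℂ) (z : ℕ → ℂ) (j : ℕ) (hj1 : 1 ≤ j) (hjn : j < n) :
    pd (gMap n a t s) j z
      = (if j = 1 then -s - t * z 0 ^ a 0 else 0)
        - phi (n-1) (fun i => a (i+1)) (fun i => z (i+1)) (j-1) := by
  obtain ⟨j', rfl⟩ : ∃ j', j = j' + 1 := ⟨j - 1, by omega⟩
  simp only [Nat.add_sub_cancel]
  have hupd : ∀ x : ℂ, (fun i => Function.update z (j'+1) x (i+1))
      = Function.update (fun i => z (i+1)) j' x := by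
    intro x
    funext i
    rw [Function.update_apply, Function.update_apply]
    by_cases h : i = j'
    · rw [if_pos h, if_pos (by omega)]
    · rw [if_neg h, if_neg (by omega)]
  have hfun : (fun x => gMap n a t s (Function.update z (j'+1) x))
      = fun x => z 0 - s * (Function.update z (j'+1) x 1)
          - t * z 0 ^ a 0 * (Function.update z (j'+1) x 1)
          - chainP (n-1) (fun i => a (i+1)) (Function.update (fun i => z (i+1)) j' x) := by
    funext x
    simp only [gMap, Function.update_of_ne (show (0:ℕ) ≠ j' + 1 from by omega), hupd x]
  rw [pd, hfun]
  have hC := hasDerivAt_chainP (n-1) (fun i => a (i+1)) (fun i => z (i+1)) j' (by omega)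
  -- the point of hC is z (j'+1) definitionally
  by_cases hj : j' = 0
  · subst hj
    simp only [Function.update_self]
    have H := (((hasDerivAt_const (z 1) (z 0)).sub
        ((hasDerivAt_id (z 1)).const_mul s)).sub
        ((hasDerivAt_id (z 1)).const_mul (t * z 0 ^ a 0))).sub hC
    rw [show deriv (fun x => z 0 - s * x - t * z 0 ^ a 0 * x
        - chainP (n-1) (fun i => a (i+1)) (Function.update (fun i => z (i+1)) 0 x)) (z 1)
        = 0 - s * 1 - t * z 0 ^ a 0 * 1 - phi (n-1) (fun i => a (i+1)) (fun i => z (i+1)) 0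
        from H.deriv]
    rw [if_pos trivial]
    ring
  · simp only [Function.update_of_ne (show (1:ℕ) ≠ j' + 1 from by omega)]
    have H := (hasDerivAt_const (z (j'+1)) (z 0 - s * z 1 - t * z 0 ^ a 0 * z 1)).sub hC
    rw [show deriv (fun x => z 0 - s * z 1 - t * z 0 ^ a 0 * z 1
        - chainP (n-1) (fun i => a (i+1)) (Function.update (fun i => z (i+1)) j' x)) (z (j'+1))
        = 0 - phi (n-1) (fun i => a (i+1)) (fun i => z (i+1)) j'
        from H.deriv]
    rw [if_neg (by omega)]

lemma rel_of_phi (m : ℕ) (b : ℕ → ℕ) (w : ℕ → ℂ) (i : ℕ) (h1 : 1 ≤ i) (h2 : i < m)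
    (hphi : phi m b w i = 0) :
    (b i : ℂ) * w i ^ (b i - 1) * vv m w i = w (i-1) ^ (b (i-1)) := by
  unfold phi at hphi
  rw [if_pos h1] at hphi
  have hne : ((-1:ℂ)^i) ≠ 0 := pow_ne_zero _ (by norm_num)
  by_cases hc : i < m - 1
  · rw [if_pos hc, if_neg (by omega : ¬ i = m - 1)] at hphi
    have hvv : vv m w i = w (i+1) := by unfold vv; rw [if_pos (by omega)]
    rw [hvv]
    have hkey : (-1:ℂ)^i * ((b i:ℂ) * w i ^ (b i - 1) * w (i+1) - w (i-1) ^ (b (i-1))) = 0 := by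
      rw [pow_succ] at hphi
      linear_combination -hphi
    have := (mul_eq_zero.1 hkey).resolve_left hne
    exact sub_eq_zero.1 this
  · rw [if_neg hc, if_pos (by omega : i = m - 1)] at hphi
    have hvv : vv m w i = 1 := by unfold vv; rw [if_neg (by omega)]
    rw [hvv]
    rw [show m = i + 1 from by omega, pow_succ] at hphi
    have hkey : (-1:ℂ)^i * ((b i:ℂ) * w i ^ (b i - 1) * 1 - w (i-1) ^ (b (i-1))) = 0 := by
      linear_combination -hphi
    have := (mul_eq_zero.1 hkey).resolve_left hne
    exact sub_eq_zero.1 this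

lemma rel0_of_phi (m : ℕ) (hm : 1 ≤ m) (b : ℕ → ℕ) (w : ℕ → ℂ) (c : ℂ)
    (hphi : phi m b w 0 = -c) :
    (b 0 : ℂ) * w 0 ^ (b 0 - 1) * vv m w 0 = c := by
  unfold phi at hphi
  rw [if_neg (by omega : ¬ 1 ≤ 0)] at hphi
  by_cases hc : 0 < m - 1
  · rw [if_pos hc, if_neg (by omega : ¬ 0 = m - 1)] at hphi
    have hvv : vv m w 0 = w 1 := by unfold vv; rw [if_pos (by omega)]
    rw [hvv]
    linear_combination -hphi
  · have hm1 : m = 1 := by omega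
    subst hm1
    rw [if_neg hc, if_pos rfl] at hphi
    have hvv : vv 1 w 0 = 1 := by unfold vv; rw [if_neg (by omega)]
    rw [hvv]
    linear_combination -hphi

lemma key (m : ℕ) (hm : 1 ≤ m) (b : ℕ → ℕ) (hb : ∀ k < m, 2 ≤ b k) (w : ℕ → ℂ)
    (s c z0 : ℂ) (hs : s ≠ 0) (hc : z0 = 0 → c = s)
    (hval : z0 = c * w 0 + chainP m b w)
    (rel0 : (b 0 : ℂ) * w 0 ^ (b 0 - 1) * vv m w 0 = c)
    (relI : ∀ i, 1 ≤ i → i < m → (b i:ℂ) * w i ^ (b i - 1) * vv m w i = w (i-1) ^ (b (i-1))) :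
    (∀ i < m, w i ≠ 0) ∧ z0 ≠ 0 ∧ triDet m (dd m b w) (ee b w) ≠ 0 := by
  have down : ∀ i, 1 ≤ i → i < m → w i = 0 → w (i-1) = 0 := by
    intro i h1 h2 h0
    have hrel := relI i h1 h2
    rw [h0, zero_pow (by have := hb i h2; omega : b i - 1 ≠ 0)] at hrel
    have hz : w (i-1) ^ (b (i-1)) = 0 := by linear_combination -hrel
    exact pow_eq_zero_iff (by have := hb (i-1) (by omega); omega : b (i-1) ≠ 0) |>.1 hz
  have hwne : ∀ i, i < m → w i ≠ 0 := by
    intro q hq hq0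
    have h00 : w 0 = 0 := by
      have haux : ∀ q', q' < m → w q' = 0 → w 0 = 0 := by
        intro q'
        induction q' with
        | zero => exact fun _ h => h
        | succ q' ih =>
          intro hq' hq0'
          have h := down (q'+1) (by omega) hq' hq0'
          rw [Nat.add_sub_cancel] at h
          exact ih (by omega) h
      exact haux q hq hq0
    have hall : ∀ i, i < m → w i = 0 := by
      intro i
      induction i with
      | zero => intro _; exact h00
      | succ i ih =>
        intro h2
        have hwi : w i = 0 := ih (by omega)
        have hrel := relI (i+1) (by omega) h2
        rw [Nat.add_sub_cancel, hwi,
          zero_pow (by have := hb i (by omega); omega : b i ≠ 0)] at hrel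
        have hbi : (b (i+1) : ℂ) ≠ 0 := by
          have := hb (i+1) h2; exact_mod_cast (by omega : b (i+1) ≠ 0)
        rcases mul_eq_zero.1 hrel with hl | hr
        · rcases mul_eq_zero.1 hl with hll | hlr
          · exact absurd hll hbi
          · exact pow_eq_zero_iff (by have := hb (i+1) h2; omega : b (i+1) - 1 ≠ 0) |>.1 hlr
        · unfold vv at hr
          by_cases hcc : i + 1 + 1 < m
          · rw [if_pos hcc] at hr
            have hld := down (i+2) (by omega) hcc hr
            rw [show i + 2 - 1 = i + 1 from by omega] at hld
            exact hld
          · rw [if_neg hcc] at hr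
            exact absurd hr one_ne_zero
    have hsum : (∑ k ∈ Finset.range (m-1), (-1:ℂ)^(k+1) * w k ^ b k * w (k+1)) = 0 := by
      apply Finset.sum_eq_zero
      intro k hk
      have hk' : k < m - 1 := Finset.mem_range.1 hk
      rw [hall k (by omega), zero_pow (by have := hb k (by omega); omega : b k ≠ 0)]
      ring
    have hchain0 : chainP m b w = 0 := by
      show (∑ k ∈ Finset.range (m-1), (-1:ℂ)^(k+1) * w k ^ b k * w (k+1))
        + (-1:ℂ)^m * w (m-1) ^ (b (m-1)) = 0
      rw [hsum, hall (m-1) (by omega),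
        zero_pow (by have := hb (m-1) (by omega); omega : b (m-1) ≠ 0)]
      ring
    have hz00 : z0 = 0 := by
      rw [hval, hchain0, h00]
      ring
    have hc0 : c = 0 := by
      rw [← rel0, h00, zero_pow (by have := hb 0 hm; omega : b 0 - 1 ≠ 0)]
      ring
    exact hs ((hc hz00).symm.trans hc0)
  refine ⟨hwne, ?_, ?_⟩
  · -- z0 ≠ 0
    have hvvne : ∀ i, i < m → vv m w i ≠ 0 := by
      intro i hi
      unfold vv
      by_cases hcc : i + 1 < m
      · rw [if_pos hcc]; exact hwne (i+1) hcc
      · rw [if_neg hcc]; exact one_ne_zero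
    have hu : ∀ k, k + 1 < m → w k ^ b k * vv m w k
        = (b (k+1):ℂ) * (w (k+1) ^ b (k+1) * vv m w (k+1)) := by
      intro k hk
      have hrel := relI (k+1) (by omega) (by omega)
      rw [Nat.add_sub_cancel] at hrel
      have hvvk : vv m w k = w (k+1) := by unfold vv; rw [if_pos (by omega)]
      rw [hvvk]
      obtain ⟨q, hqe⟩ : ∃ q, b (k+1) = q + 1 := ⟨b (k+1) - 1, by have := hb (k+1) (by omega); omega⟩
      rw [hqe] at hrel ⊢
      simp only [show q+1-1 = q from rfl] at hrel
      rw [pow_succ]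
      push_cast at hrel ⊢
      linear_combination (-(w (k+1))) * hrel
    have hBpos : ∀ k, 0 < ∏ j ∈ Finset.range k, b (j+1) ∨ ¬ k < m := by
      intro k
      by_cases hk : k < m
      · left
        apply Finset.prod_pos
        intro j hj
        have := hb (j+1) (by have := Finset.mem_range.1 hj; omega)
        omega
      · right; exact hk
    have huB : ∀ k, k < m → ((∏ j ∈ Finset.range k, b (j+1) : ℕ) : ℂ)
        * (w k ^ b k * vv m w k) = w 0 ^ b 0 * vv m w 0 := by
      intro k
      induction k with
      | zero => intro _; simp
      | succ k ih =>
        intro hk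
        rw [Finset.prod_range_succ, Nat.cast_mul, mul_assoc, ← hu k hk]
        exact ih (by omega)
    have hchain : chainP m b w
        = ∑ k ∈ Finset.range m, (-1:ℂ)^(k+1) * (w k ^ b k * vv m w k) := by
      obtain ⟨m', hme⟩ : ∃ m', m = m' + 1 := ⟨m - 1, by omega⟩
      subst hme
      show (∑ k ∈ Finset.range m', (-1:ℂ)^(k+1) * w k ^ b k * w (k+1))
          + (-1:ℂ)^(m'+1) * w m' ^ b m' = _
      rw [Finset.sum_range_succ]
      congr 1
      · apply Finset.sum_congr rfl
        intro k hk
        have hk' : k < m' := Finset.mem_range.1 hk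
        unfold vv
        rw [if_pos (by omega)]
        ring
      · unfold vv
        rw [if_neg (by omega)]
        ring
    have hcw : c * w 0 = (b 0:ℂ) * (w 0 ^ b 0 * vv m w 0) := by
      obtain ⟨q, hqe⟩ : ∃ q, b 0 = q + 1 := ⟨b 0 - 1, by have := hb 0 hm; omega⟩
      rw [← rel0, hqe]
      simp only [show q+1-1 = q from rfl]
      rw [pow_succ]
      ring
    have hsum : (∑ k ∈ Finset.range m, (-1:ℂ)^(k+1) * (w k ^ b k * vv m w k))
        = (w 0 ^ b 0 * vv m w 0)
          * (∑ k ∈ Finset.range m, (-1:ℂ)^(k+1) * ((∏ j ∈ Finset.range k, b (j+1) : ℕ):ℂ)⁻¹) := by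
      rw [Finset.mul_sum]
      apply Finset.sum_congr rfl
      intro k hk
      have hk' : k < m := Finset.mem_range.1 hk
      have hB := huB k hk'
      have hBne : ((∏ j ∈ Finset.range k, b (j+1) : ℕ):ℂ) ≠ 0 := by
        have := (hBpos k).resolve_right (by omega)
        exact_mod_cast (by omega : (∏ j ∈ Finset.range k, b (j+1)) ≠ 0)
      rw [← hB]
      have hcanc : ((∏ j ∈ Finset.range k, b (j+1) : ℕ):ℂ)
          * ((∏ j ∈ Finset.range k, b (j+1) : ℕ):ℂ)⁻¹ = 1 := mul_inv_cancel₀ hBne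
      linear_combination ((-1:ℂ)^k * (w k ^ b k * vv m w k)) * hcanc
    have hvz : z0 = (w 0 ^ b 0 * vv m w 0) * ((b 0:ℂ)
        + ∑ k ∈ Finset.range m, (-1:ℂ)^(k+1) * ((∏ j ∈ Finset.range k, b (j+1) : ℕ):ℂ)⁻¹) := by
      rw [hval, hchain, hcw, hsum]
      ring
    have hu0ne : (w 0 ^ b 0 * vv m w 0) ≠ 0 :=
      mul_ne_zero (pow_ne_zero _ (hwne 0 hm)) (hvvne 0 hm)
    have hrhone : ((b 0:ℂ)
        + ∑ k ∈ Finset.range m, (-1:ℂ)^(k+1) * ((∏ j ∈ Finset.range k, b (j+1) : ℕ):ℂ)⁻¹) ≠ 0 := by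
      intro h0
      have hb0 : 2 ≤ b 0 := hb 0 hm
      have heq : ((b 0:ℕ):ℂ)
          = -∑ k ∈ Finset.range m, (-1:ℂ)^(k+1) * ((∏ j ∈ Finset.range k, b (j+1) : ℕ):ℂ)⁻¹ := by
        linear_combination h0
      have hbound : ‖∑ k ∈ Finset.range m,
          (-1:ℂ)^(k+1) * ((∏ j ∈ Finset.range k, b (j+1) : ℕ):ℂ)⁻¹‖ < 2 := by
        have h1 : ‖∑ k ∈ Finset.range m,
            (-1:ℂ)^(k+1) * ((∏ j ∈ Finset.range k, b (j+1) : ℕ):ℂ)⁻¹‖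
            ≤ ∑ k ∈ Finset.range m, (1/2:ℝ)^k := by
          refine le_trans (norm_sum_le _ _) (Finset.sum_le_sum ?_)
          intro k hk
          have hk' : k < m := Finset.mem_range.1 hk
          rw [norm_mul, norm_pow, norm_neg, norm_one, one_pow, one_mul, norm_inv]
          have h2k : ((2^k : ℕ):ℝ) ≤ ((∏ j ∈ Finset.range k, b (j+1) : ℕ):ℝ) := by
            have : (2^k : ℕ) ≤ ∏ j ∈ Finset.range k, b (j+1) := by
              have := Finset.pow_card_le_prod (Finset.range k) (fun j => b (j+1)) 2
                (fun j hj => hb (j+1) (by have := Finset.mem_range.1 hj; omega))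
              simpa using this
            exact_mod_cast this
          have hnormB : ‖((∏ j ∈ Finset.range k, b (j+1) : ℕ):ℂ)‖
              = ((∏ j ∈ Finset.range k, b (j+1) : ℕ):ℝ) := by
            rw [Complex.norm_natCast]
          rw [hnormB]
          rw [show ((1:ℝ)/2)^k = (((2:ℝ))^k)⁻¹ from by rw [div_pow, one_pow, ← one_div]]
          apply inv_anti₀ (by positivity)
          exact_mod_cast h2k
        have h2 : (∑ k ∈ Finset.range m, (1/2:ℝ)^k) < 2 := by
          rw [geom_sum_eq (by norm_num : (1/2:ℝ) ≠ 1)]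
          rw [div_lt_iff_of_neg (by norm_num : (1/2:ℝ) - 1 < 0)]
          have := pow_pos (by norm_num : (0:ℝ) < 1/2) m
          linarith
        linarith
      have hnb : ‖((b 0:ℕ):ℂ)‖ = ((b 0:ℕ):ℝ) := Complex.norm_natCast _
      rw [heq, norm_neg] at hnb
      have h2b : (2:ℝ) ≤ ((b 0:ℕ):ℝ) := by exact_mod_cast hb0
      linarith [hbound, hnb.ge, hnb.le]
    rw [hvz]
    exact mul_ne_zero hu0ne hrhone
  · -- determinant
    have hvvne : ∀ i, i < m → vv m w i ≠ 0 := by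
      intro i hi
      unfold vv
      by_cases hcc : i + 1 < m
      · rw [if_pos hcc]; exact hwne (i+1) hcc
      · rw [if_neg hcc]; exact one_ne_zero
    have hd : ∀ j < m, dd m b w j ≠ 0 := by
      intro j hj
      have hbj := hb j hj
      refine mul_ne_zero (mul_ne_zero (mul_ne_zero (mul_ne_zero ?_ ?_) ?_) ?_) ?_
      · exact pow_ne_zero _ (by norm_num)
      · exact_mod_cast (by omega : b j ≠ 0)
      · exact cast_sub_one_ne hbj
      · exact pow_ne_zero _ (hwne j hj)
      · exact hvvne j hj
    have he : ∀ j, j + 2 ≤ m → ee b w j ≠ 0 := by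
      intro j hj
      have hbj := hb j (by omega)
      exact mul_ne_zero (mul_ne_zero (pow_ne_zero _ (by norm_num))
        (by exact_mod_cast (by omega : b j ≠ 0))) (pow_ne_zero _ (hwne j (by omega)))
    have hstar : ∀ j, j + 2 ≤ m → (b j:ℂ) * dd m b w j * dd m b w (j+1)
        = -((b j:ℂ) - 1) * ((b (j+1):ℂ) - 1) * (ee b w j)^2 := by
      intro j hj
      have hrel := relI (j+1) (by omega) (by omega)
      rw [Nat.add_sub_cancel] at hrel
      obtain ⟨p, hp⟩ : ∃ p, b j = p + 2 := ⟨b j - 2, by have := hb j (by omega); omega⟩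
      obtain ⟨q, hq⟩ : ∃ q, b (j+1) = q + 2 := ⟨b (j+1) - 2, by have := hb (j+1) (by omega); omega⟩
      unfold dd ee
      unfold vv at hrel ⊢
      rw [hp, hq] at hrel ⊢
      simp only [show p+2-2 = p from rfl, show p+2-1 = p+1 from rfl,
        show q+2-2 = q from rfl, show q+2-1 = q+1 from rfl] at hrel ⊢
      rw [if_pos (by omega : j + 1 < m)]
      push_cast at hrel ⊢
      rw [pow_succ ((-1:ℂ)) (j+1)]
      linear_combination (-(((-1:ℂ)^(j+1))^2 * ((p:ℂ)+2)^2 * ((p:ℂ)+1) * ((q:ℂ)+1)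
        * w j ^ p)) * hrel
    exact triDet_ne_zero m (dd m b w) (ee b w) b hm hb hd he hstar

end S13

/-- If `s ≠ 0`, `g_a^{t,s}(z) = 0` and `∂g_a^{t,s}/∂z_j(z) = 0` for
`2 ≤ j ≤ n`, then all coordinates `z_1, …, z_n` are nonzero and the Hessian matrix of
`p_{−a}` at `(z_2, …, z_n)` is invertible. -/
theorem stmt_13 (n : ℕ) (hn : 2 ≤ n) (a : ℕ → ℕ) (ha : ∀ i < n, 2 ≤ a i)
    (t s : ℂ) (hs : s ≠ 0) (z : ℕ → ℂ)
    (hz : gMap n a t s z = 0)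
    (hcrit : ∀ j : ℕ, 1 ≤ j → j < n → pd (gMap n a t s) j z = 0) :
    (∀ i : ℕ, i < n → z i ≠ 0) ∧
    IsUnit
      (Matrix.det
        (Matrix.of fun i j : Fin (n - 1) =>
          pd (pd (chainP (n - 1) (fun i => a (i + 1))) (j : ℕ)) (i : ℕ)
            (fun i => z (i + 1)))) := by
  obtain ⟨n', rfl⟩ : ∃ n', n = n' + 2 := ⟨n - 2, by omega⟩
  simp only [show n' + 2 - 1 = n' + 1 from rfl]
  have hb2 : ∀ k < n' + 1, 2 ≤ a (k+1) := fun k hk => ha (k+1) (by omega)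
  have hphiI : ∀ i, 1 ≤ i → i < n' + 1 →
      S13.phi (n'+1) (fun i => a (i+1)) (fun i => z (i+1)) i = 0 := by
    intro i h1 h2
    have h := hcrit (i+1) (by omega) (by omega)
    rw [S13.pd_gMap (n'+2) a t s z (i+1) (by omega) (by omega)] at h
    rw [if_neg (by omega : ¬ i + 1 = 1), Nat.add_sub_cancel] at h
    simp only [show n' + 2 - 1 = n' + 1 from rfl] at h
    linear_combination -h
  have hphi0 : S13.phi (n'+1) (fun i => a (i+1)) (fun i => z (i+1)) 0
      = -(s + t * z 0 ^ a 0) := by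
    have h := hcrit 1 (by omega) (by omega)
    rw [S13.pd_gMap (n'+2) a t s z 1 (by omega) (by omega)] at h
    simp only [show n' + 2 - 1 = n' + 1 from rfl, show (1:ℕ) - 1 = 0 from rfl] at h
    rw [if_pos trivial] at h
    linear_combination -h
  have rel0 := S13.rel0_of_phi (n'+1) (by omega) (fun i => a (i+1)) (fun i => z (i+1))
    (s + t * z 0 ^ a 0) hphi0
  have relI : ∀ i, 1 ≤ i → i < n' + 1 →
      ((a (i+1) : ℂ)) * (z (i+1)) ^ (a (i+1) - 1)
        * S13.vv (n'+1) (fun i => z (i+1)) i = (z (i-1+1)) ^ (a (i-1+1)) :=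
    fun i h1 h2 => S13.rel_of_phi (n'+1) (fun i => a (i+1)) (fun i => z (i+1)) i h1 h2
      (hphiI i h1 h2)
  have hval : z 0 = (s + t * z 0 ^ a 0) * z 1
      + chainP (n'+1) (fun i => a (i+1)) (fun i => z (i+1)) := by
    simp only [gMap, show n' + 2 - 1 = n' + 1 from rfl] at hz
    linear_combination hz
  have hcs : z 0 = 0 → s + t * z 0 ^ a 0 = s := by
    intro h
    rw [h, zero_pow (by have := ha 0 (by omega); omega : a 0 ≠ 0)]
    ring
  obtain ⟨hwne, hz0ne, hdet⟩ := S13.key (n'+1) (by omega) (fun i => a (i+1)) hb2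
    (fun i => z (i+1)) s (s + t * z 0 ^ a 0) (z 0) hs hcs hval rel0 relI
  constructor
  · intro i hi
    rcases Nat.eq_zero_or_pos i with h0 | h0
    · subst h0; exact hz0ne
    · obtain ⟨i', rfl⟩ : ∃ i', i = i' + 1 := ⟨i - 1, by omega⟩
      exact hwne i' (by omega)
  · have hM : (Matrix.of fun i j : Fin (n'+1) =>
        pd (pd (chainP (n'+1) (fun i => a (i + 1))) (j : ℕ)) (i : ℕ) (fun i => z (i + 1)))
        = S13.triMat (n'+1) (S13.dd (n'+1) (fun i => a (i+1)) (fun i => z (i+1)))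
            (S13.ee (fun i => a (i+1)) (fun i => z (i+1))) := by
      ext i j
      simp only [Matrix.of_apply]
      rw [S13.pd_pd_chainP (n'+1) (fun i => a (i+1)) (fun i => z (i+1)) (i:ℕ) (j:ℕ)
        i.isLt j.isLt hb2]
      rfl
    have hd2 : Matrix.det (Matrix.of fun i j : Fin (n'+1) =>
        pd (pd (chainP (n'+1) (fun i => a (i + 1))) (j : ℕ)) (i : ℕ) (fun i => z (i + 1))) ≠ 0 := by
      rw [hM, S13.det_triMat]
      exact hdet
    exact isUnit_iff_ne_zero.mpr hd2
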